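/- Let $b_n$ be a real sequence with $b_n \le b_{n+1} < 0$ for all $n$, and let $x \in (0,2)$. Suppose $x - b_n \ge 2$ for all $n \le N$. Define $\gamma_n \ge 0$ by $x - b_n = 2\cosh(\gamma_n)$ for $n \le N$. Define $\psi_n$ by $\psi_{-1}=0$, $\psi_0=1$, and $\psi_{n+1} = (1+e^{-2\gamma_{n+1}})\psi_n - e^{-(\gamma_n+\gamma_{n+1})}\psi_{n-1}$. Then $\psi_{n+1} \ge \psi_n$ for all $0 \le n < N$, and in particular $\psi_n \ge 1$ for $0 \le n \le N$. -/
import Mathlib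


theorem stmt_0 (b γ ψ : ℤ → ℝ) (N : ℤ) (x : ℝ)
    (hb : ∀ n : ℤ, b n ≤ b (n + 1)) (hbneg : ∀ n : ℤ, b n < 0)
    (hx : 0 < x ∧ x < 2)
    (hforb : ∀ n ≤ N, 2 ≤ x - b n)
    (hγ : ∀ n ≤ N, 0 ≤ γ n ∧ x - b n = 2 * Real.cosh (γ n))
    (hψm1 : ψ (-1) = 0) (hψ0 : ψ 0 = 1)
    (hrec : ∀ n : ℤ, 0 ≤ n → n < N →
      ψ (n + 1) = (1 + Real.exp (-2 * γ (n + 1))) * ψ n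
        - Real.exp (-(γ n + γ (n + 1))) * ψ (n - 1)) :
    (∀ n : ℤ, 0 ≤ n → n < N → ψ n ≤ ψ (n + 1)) ∧
    (∀ n : ℤ, 0 ≤ n → n ≤ N → 1 ≤ ψ n) := by
  have key : ∀ k : ℕ, (k : ℤ) ≤ N → ψ ((k : ℤ) - 1) ≤ ψ k ∧ 1 ≤ ψ k := by
    intro k
    induction k with
    | zero =>
      intro _
      norm_num [hψm1, hψ0]
    | succ k ih =>
      intro hk1
      have hkN : (k : ℤ) < N := by push_cast at hk1 ⊢; omega
      obtain ⟨ihmono, ih1⟩ := ih (le_of_lt hkN)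
      have hγk := hγ k (le_of_lt hkN)
      have hγk1 := hγ (k + 1) (by push_cast at hk1 ⊢; omega)
      -- γ (k+1) ≤ γ k
      have hmono : γ ((k : ℤ) + 1) ≤ γ k := by
        have hcosh : Real.cosh (γ ((k : ℤ) + 1)) ≤ Real.cosh (γ k) := by
          have := hb k
          nlinarith [hγk.2, hγk1.2]
        have := (Real.cosh_le_cosh).mp hcosh
        rwa [abs_of_nonneg hγk1.1, abs_of_nonneg hγk.1] at this
      have hexp : Real.exp (-(γ (k : ℤ) + γ ((k : ℤ) + 1)))
          ≤ Real.exp (-2 * γ ((k : ℤ) + 1)) := by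
        apply Real.exp_le_exp.mpr
        linarith
      have hrec' := hrec k (Int.ofNat_nonneg k) hkN
      have hstep : ψ (k : ℤ) ≤ ψ ((k : ℤ) + 1) := by
        have hψpos : (0:ℝ) < ψ (k : ℤ) := lt_of_lt_of_le one_pos ih1
        have hexp_pos := Real.exp_pos (-(γ (k : ℤ) + γ ((k : ℤ) + 1)))
        nlinarith [hexp, ihmono, hψpos]
      constructor
      · push_cast
        simpa using hstep
      · push_cast
        linarith
  constructor
  · intro n hn hnN
    obtain ⟨k, rfl⟩ := Int.eq_ofNat_of_zero_le hn
    have := (key (k + 1) (by push_cast; omega)).1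
    push_cast at this ⊢
    simpa using this
  · intro n hn hnN
    obtain ⟨k, rfl⟩ := Int.eq_ofNat_of_zero_le hn
    exact (key k hnN).2
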